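/- Let d, n, k be positive integers, let x_1, …, x_n ∈ ℝ^d with labels y_1, …, y_n ∈ ℝ, let ℓ* ∈ ℝ^d, and let I ⊆ {1, …, n} be nonempty with y_i = ⟨x_i, ℓ*⟩ for every i ∈ I. Let 0 < α ≤ 1 and assume the inliers are α-anti-concentrated: for every nonzero v ∈ ℝ^d, |{i ∈ I : ⟨x_i, v⟩ = 0}| < α·|I|. Suppose S_1, …, S_k is a partition of {1, …, n} with |S_j| ≥ α·n for every j, and there exist vectors ℓ_1, …, ℓ_k ∈ ℝ^d with y_i = ⟨x_i, ℓ_j⟩ for every j and every i ∈ S_j. Then there exists j with ℓ_j = ℓ*. -/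

import Mathlib

open scoped Classical

theorem stmt_0 (d n k : ℕ) (hd : 0 < d) (hn : 0 < n) (hk : 0 < k)
    (x : Fin n → EuclideanSpace ℝ (Fin d)) (y : Fin n → ℝ)
    (ℓstar : EuclideanSpace ℝ (Fin d)) (I : Finset (Fin n)) (hI : I.Nonempty)
    (hIy : ∀ i ∈ I, y i = (inner ℝ (x i) ℓstar : ℝ))
    (α : ℝ) (hα0 : 0 < α) (hα1 : α ≤ 1)
    (hAC : ∀ v : EuclideanSpace ℝ (Fin d), v ≠ 0 →
      ((I.filter (fun i => (inner ℝ (x i) v : ℝ) = 0)).card : ℝ) < α * I.card)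
    (S : Fin k → Finset (Fin n))
    (hdisj : ∀ j j' : Fin k, j ≠ j' → Disjoint (S j) (S j'))
    (hcover : Finset.univ.biUnion S = (Finset.univ : Finset (Fin n)))
    (hsize : ∀ j, α * n ≤ ((S j).card : ℝ))
    (ℓ : Fin k → EuclideanSpace ℝ (Fin d))
    (hℓ : ∀ j, ∀ i ∈ S j, y i = (inner ℝ (x i) (ℓ j) : ℝ)) :
    ∃ j, ℓ j = ℓstar := by
  -- total size of partition = n
  have hsum : ∑ j : Fin k, (S j).card = n := by
    rw [← Finset.card_biUnion (fun j _ j' _ hjj' => hdisj j j' hjj'), hcover,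
      Finset.card_univ, Fintype.card_fin]
  -- kα ≤ 1
  have hkα : (k : ℝ) * α ≤ 1 := by
    have h1 : (k : ℝ) * (α * n) ≤ ∑ j : Fin k, ((S j).card : ℝ) := by
      calc (k : ℝ) * (α * n) = ∑ _j : Fin k, α * n := by
            simp [Finset.sum_const, mul_comm]
        _ ≤ _ := Finset.sum_le_sum (fun j _ => hsize j)
    have h2 : (∑ j : Fin k, ((S j).card : ℝ)) = n := by
      rw [← Nat.cast_sum, hsum]
    rw [h2] at h1
    have hn' : (0 : ℝ) < n := by exact_mod_cast hn
    nlinarith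
  -- the pieces I ∩ S j cover I
  have hIsum : ∑ j : Fin k, (I ∩ S j).card = I.card := by
    rw [← Finset.card_biUnion (fun j _ j' _ hjj' =>
      ((hdisj j j' hjj').mono (Finset.inter_subset_right) (Finset.inter_subset_right)))]
    congr 1
    rw [← Finset.inter_biUnion, hcover, Finset.inter_univ]
  -- pigeonhole: some j with α|I| ≤ |I ∩ S j|
  have hIpos : (0 : ℝ) < I.card := by exact_mod_cast Finset.card_pos.mpr hI
  have hpig : ∃ j, α * I.card ≤ ((I ∩ S j).card : ℝ) := by
    by_contra h
    push_neg at h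
    have hlt : (∑ j : Fin k, ((I ∩ S j).card : ℝ)) < ∑ _j : Fin k, α * I.card :=
      Finset.sum_lt_sum_of_nonempty (Finset.univ_nonempty_iff.mpr ⟨⟨0, hk⟩⟩) (fun j _ => h j)
    have heq : (∑ j : Fin k, ((I ∩ S j).card : ℝ)) = I.card := by
      rw [← Nat.cast_sum, hIsum]
    rw [heq, Finset.sum_const, Finset.card_univ, Fintype.card_fin, nsmul_eq_mul] at hlt
    nlinarith
  obtain ⟨j, hj⟩ := hpig
  refine ⟨j, ?_⟩
  by_contra hne
  have hv : ℓ j - ℓstar ≠ 0 := sub_ne_zero.mpr hne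
  have hsub : I ∩ S j ⊆ I.filter (fun i => (inner ℝ (x i) (ℓ j - ℓstar) : ℝ) = 0) := by
    intro i hi
    rw [Finset.mem_inter] at hi
    rw [Finset.mem_filter]
    refine ⟨hi.1, ?_⟩
    rw [inner_sub_right, ← hIy i hi.1, ← hℓ j i hi.2, sub_self]
  have hle := Finset.card_le_card hsub
  have := hAC (ℓ j - ℓstar) hv
  have : ((I ∩ S j).card : ℝ) ≤ ((I.filter (fun i => (inner ℝ (x i) (ℓ j - ℓstar) : ℝ) = 0)).card : ℝ) := by
    exact_mod_cast hle
  linarith [hAC (ℓ j - ℓstar) hv]
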